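/- For every q in the open interval (1, 2), the supremum over z in (0,1) of the quantity z^{2-q}(1 - z^{q-1})^2 / ((1 - z^q)(1 - z^{2-q})) equals (q-1)^2 / (q(2-q)). -/

import Mathlib

open Filter Topology Set

private lemma sinh_mul_le' (c : ℝ) (hc0 : 0 ≤ c) (hc1 : c ≤ 1) {v : ℝ} (hv : 0 ≤ v) :
    Real.sinh (c * v) ≤ c * Real.sinh v := by
  have hmono : MonotoneOn (fun v => c * Real.sinh v - Real.sinh (c * v)) (Set.Ici 0) := by
    apply monotoneOn_of_deriv_nonneg (convex_Ici 0)
    · fun_prop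
    · fun_prop
    · intro x hx
      rw [interior_Ici] at hx
      have : HasDerivAt (fun v => c * Real.sinh v - Real.sinh (c * v))
          (c * Real.cosh x - Real.cosh (c * x) * c) x := by
        exact ((Real.hasDerivAt_sinh x).const_mul c).sub
          (((Real.hasDerivAt_sinh (c*x)).comp x ((hasDerivAt_id x).const_mul c)).congr_deriv
            (by ring))
      rw [this.deriv]
      have hcc : Real.cosh (c * x) ≤ Real.cosh x := by
        rw [Real.cosh_le_cosh]
        rw [abs_of_nonneg (mul_nonneg hc0 hx.le), abs_of_nonneg hx.le]
        nlinarith [(Set.mem_Ioi.mp hx).le]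
      nlinarith
  have h0 := hmono (Set.self_mem_Ici) (Set.mem_Ici.2 hv) hv
  simp at h0
  linarith

private lemma cosh_mul_le' (c : ℝ) (hc0 : 0 ≤ c) (hc1 : c ≤ 1) {v : ℝ} (hv : 0 ≤ v) :
    Real.cosh (c * v) ≤ c ^ 2 * Real.cosh v + (1 - c ^ 2) := by
  have hmono : MonotoneOn (fun v => c ^ 2 * Real.cosh v + (1 - c ^ 2) - Real.cosh (c * v))
      (Set.Ici 0) := by
    apply monotoneOn_of_deriv_nonneg (convex_Ici 0)
    · fun_prop
    · fun_prop
    · intro x hx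
      rw [interior_Ici] at hx
      have : HasDerivAt (fun v => c ^ 2 * Real.cosh v + (1 - c ^ 2) - Real.cosh (c * v))
          (c ^ 2 * Real.sinh x - Real.sinh (c * x) * c) x := by
        exact (((Real.hasDerivAt_cosh x).const_mul (c^2)).add_const _).sub
          (((Real.hasDerivAt_cosh (c*x)).comp x ((hasDerivAt_id x).const_mul c)).congr_deriv
            (by ring))
      rw [this.deriv]
      have := sinh_mul_le' c hc0 hc1 hx.le
      nlinarith
  have h0 := hmono (Set.self_mem_Ici) (Set.mem_Ici.2 hv) hv
  simp at h0
  linarith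

private lemma star_ineq' (q : ℝ) (hq : q ∈ Set.Ioo (1 : ℝ) 2) {z : ℝ} (hz0 : 0 < z)
    (hz1 : z < 1) :
    z ^ q + z ^ (2 - q) ≤ (q - 1) ^ 2 * (1 + z ^ 2) + 2 * (q * (2 - q)) * z := by
  obtain ⟨hq1, hq2⟩ := hq
  set L := Real.log z with hL
  have hLneg : L < 0 := Real.log_neg hz0 hz1
  have hA : z = Real.exp L := (Real.exp_log hz0).symm
  have key := cosh_mul_le' (q - 1) (by linarith) (by linarith) (v := -L) (by linarith)
  rw [Real.cosh_eq, Real.cosh_eq] at key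
  have e1 : z ^ q = Real.exp L * Real.exp ((q - 1) * L) := by
    rw [Real.rpow_def_of_pos hz0, ← Real.exp_add, hL]; ring_nf
  have e2 : z ^ (2 - q) = Real.exp L * Real.exp (-((q - 1) * L)) := by
    rw [Real.rpow_def_of_pos hz0, ← Real.exp_add, hL]; ring_nf
  have e3 : Real.exp ((q-1) * L) * Real.exp (-((q-1) * L)) = 1 := by
    rw [← Real.exp_add]; simp
  have e4 : Real.exp L * Real.exp (-L) = 1 := by rw [← Real.exp_add]; simp
  have h5 : (q - 1) * -L = -((q-1) * L) := by ring
  rw [h5] at key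
  have hexp : (0:ℝ) < Real.exp L := Real.exp_pos _
  simp only [neg_neg] at key
  rw [e1, e2, hA]
  nlinarith [mul_le_mul_of_nonneg_left key hexp.le, e3, e4]

private lemma pointwise' (q : ℝ) (hq : q ∈ Set.Ioo (1 : ℝ) 2) {z : ℝ}
    (hz : z ∈ Set.Ioo (0:ℝ) 1) :
    z ^ (2 - q) * (1 - z ^ (q - 1)) ^ 2 / ((1 - z ^ q) * (1 - z ^ (2 - q)))
      ≤ (q - 1) ^ 2 / (q * (2 - q)) := by
  obtain ⟨hq1, hq2⟩ := hq
  obtain ⟨hz0, hz1⟩ := hz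
  have hzq : z ^ q < 1 := Real.rpow_lt_one hz0.le hz1 (by linarith)
  have hzq2 : z ^ (2 - q) < 1 := Real.rpow_lt_one hz0.le hz1 (by linarith)
  have hden : 0 < (1 - z ^ q) * (1 - z ^ (2 - q)) := by
    apply mul_pos <;> linarith
  have hq0 : (0:ℝ) < q * (2 - q) := by nlinarith
  rw [div_le_div_iff₀ hden hq0]
  have star := star_ineq' q ⟨hq1, hq2⟩ hz0 hz1
  have e1 : z ^ (2 - q) * z ^ (q - 1) = z := by
    rw [← Real.rpow_add hz0]; norm_num
  have e2 : z ^ q * z ^ (2 - q) = z ^ 2 := by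
    rw [← Real.rpow_add hz0]; norm_num
  have e3 : z ^ (2 - q) * (z ^ (q - 1) * z ^ (q - 1)) = z ^ q := by
    rw [← Real.rpow_add hz0, ← Real.rpow_add hz0]
    congr 1; ring
  nlinarith [star, e1, e2, e3]

private lemma slope_tendsto' (r : ℝ) :
    Tendsto (fun z : ℝ => (z ^ r - 1) / (z - 1)) (𝓝[≠] (1:ℝ)) (𝓝 r) := by
  have h : HasDerivAt (fun x : ℝ => x ^ r) (r * (1:ℝ) ^ (r - 1)) 1 :=
    Real.hasDerivAt_rpow_const (Or.inl one_ne_zero)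
  rw [Real.one_rpow, mul_one] at h
  have := hasDerivAt_iff_tendsto_slope.mp h
  refine this.congr (fun z => ?_)
  rw [slope_def_field, Real.one_rpow]

private lemma tendsto_f' (q : ℝ) (hq : q ∈ Set.Ioo (1 : ℝ) 2) :
    Tendsto (fun z : ℝ =>
        z ^ (2 - q) * (1 - z ^ (q - 1)) ^ 2 /
          ((1 - z ^ q) * (1 - z ^ (2 - q)))) (𝓝[Set.Ioo (0:ℝ) 1] 1)
      (𝓝 ((q - 1) ^ 2 / (q * (2 - q)))) := by
  obtain ⟨hq1, hq2⟩ := hq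
  have hsub : 𝓝[Set.Ioo (0:ℝ) 1] (1:ℝ) ≤ 𝓝[≠] (1:ℝ) :=
    nhdsWithin_mono _ (fun z hz => ne_of_lt hz.2)
  have hle : 𝓝[Set.Ioo (0:ℝ) 1] (1:ℝ) ≤ 𝓝 (1:ℝ) := nhdsWithin_le_nhds
  have h1 : Tendsto (fun z : ℝ => (z ^ (q-1) - 1) / (z - 1)) (𝓝[Set.Ioo (0:ℝ) 1] 1)
      (𝓝 (q-1)) := (slope_tendsto' (q-1)).mono_left hsub
  have h2 : Tendsto (fun z : ℝ => (z ^ q - 1) / (z - 1)) (𝓝[Set.Ioo (0:ℝ) 1] 1)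
      (𝓝 q) := (slope_tendsto' q).mono_left hsub
  have h3 : Tendsto (fun z : ℝ => (z ^ (2-q) - 1) / (z - 1)) (𝓝[Set.Ioo (0:ℝ) 1] 1)
      (𝓝 (2-q)) := (slope_tendsto' (2-q)).mono_left hsub
  have h4 : Tendsto (fun z : ℝ => z ^ (2 - q)) (𝓝[Set.Ioo (0:ℝ) 1] 1) (𝓝 1) := by
    have : ContinuousAt (fun z : ℝ => z ^ (2 - q)) 1 :=
      Real.continuousAt_rpow_const 1 (2-q) (Or.inl one_ne_zero)
    have := this.tendsto.mono_left hle
    simpa using this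
  have hg : Tendsto (fun z : ℝ =>
      z ^ (2 - q) * ((z ^ (q-1) - 1) / (z - 1)) ^ 2 /
        (((z ^ q - 1) / (z - 1)) * ((z ^ (2-q) - 1) / (z - 1))))
      (𝓝[Set.Ioo (0:ℝ) 1] 1) (𝓝 (1 * (q-1) ^ 2 / (q * (2-q)))) := by
    exact (h4.mul (h1.pow 2)).div (h2.mul h3) (by nlinarith)
  rw [one_mul] at hg
  refine hg.congr' ?_
  filter_upwards [self_mem_nhdsWithin] with z hz
  obtain ⟨hz0, hz1⟩ := hz
  have hz1' : z - 1 ≠ 0 := by intro h; nlinarith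
  have hn1 : (1:ℝ) - z ^ q ≠ 0 := by
    have := Real.rpow_lt_one hz0.le hz1 (by linarith : (0:ℝ) < q); intro h; nlinarith
  have hn2 : (1:ℝ) - z ^ (2 - q) ≠ 0 := by
    have := Real.rpow_lt_one hz0.le hz1 (by linarith : (0:ℝ) < 2 - q); intro h; nlinarith
  have hn1' : z ^ q - 1 ≠ 0 := fun h => hn1 (by linarith [sub_eq_zero.mp h])
  have hn2' : z ^ (2 - q) - 1 ≠ 0 := fun h => hn2 (by linarith [sub_eq_zero.mp h])
  field_simp
  ring

/-- Identity (A.1): for `q ∈ (1,2)`,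
`sup_{0<z<1} z^(2-q)(1-z^(q-1))^2 / ((1-z^q)(1-z^(2-q))) = (q-1)^2/(q(2-q))`. -/
theorem stmt_1 (q : ℝ) (hq : q ∈ Set.Ioo (1 : ℝ) 2) :
    sSup ((fun z : ℝ =>
        z ^ (2 - q) * (1 - z ^ (q - 1)) ^ 2 /
          ((1 - z ^ q) * (1 - z ^ (2 - q)))) '' Set.Ioo (0 : ℝ) 1) =
      (q - 1) ^ 2 / (q * (2 - q)) := by
  apply csSup_eq_of_forall_le_of_forall_lt_exists_gt
  · exact ⟨_, ⟨(1:ℝ)/2, by norm_num, rfl⟩⟩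
  · rintro x ⟨z, hz, rfl⟩
    exact pointwise' q hq hz
  · intro w hw
    haveI : (𝓝[Set.Ioo (0:ℝ) 1] (1:ℝ)).NeBot :=
      right_nhdsWithin_Ioo_neBot (by norm_num : (0:ℝ) < 1)
    have hev : ∀ᶠ z in 𝓝[Set.Ioo (0:ℝ) 1] (1:ℝ), w <
        z ^ (2 - q) * (1 - z ^ (q - 1)) ^ 2 / ((1 - z ^ q) * (1 - z ^ (2 - q))) :=
      (tendsto_f' q hq).eventually (eventually_gt_nhds hw)
    obtain ⟨z, hzw, hz⟩ := (hev.and self_mem_nhdsWithin).exists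
    exact ⟨_, ⟨z, hz, rfl⟩, hzw⟩
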